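/- Assume trdeg C[V]^g = codim O_reg, and let x ∈ V be a regular element such that dim span{df(x) : f ∈ C[V]^g} = codim O_x = trdeg C[V]^g and such that the plane span(x, a) is not contained in Sing. Then span{df(x) : f ∈ Y_a} = L_vert(x, a). -/

import Mathlib

open Matrix Module MvPolynomial

attribute [local instance 100] LieRing.ofAssociativeRing

/-! ### Blocks of the Jordan–Kronecker canonical form of a pencil of linear maps -/

/-- The four kinds of blocks occurring in the Jordan–Kronecker canonical form of a pencil
`A + λB`.  `jordan lam0 k` is a Jordan block of size `(k+1) × (k+1)` with (finite) eigenvalue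
`lam0`; `jordanInf k` is a Jordan block of size `(k+1) × (k+1)` with eigenvalue `∞`;
`horKron e` is a horizontal Kronecker block of size `e × (e+1)` (minimal column index `e`);
`vertKron e` is a vertical Kronecker block of size `(e+1) × e` (minimal row index `e`).
A zero `g × h` block is regarded as the block-diagonal sum of `g` vertical Kronecker blocks
of size `1 × 0` and `h` horizontal Kronecker blocks of size `0 × 1`. -/
inductive JKBlock (K : Type*) where
  | jordan (lam0 : K) (k : ℕ)
  | jordanInf (k : ℕ)
  | horKron (eps : ℕ)
  | vertKron (eta : ℕ)

namespace JKBlock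

variable {K : Type*}

/-- Number of rows of a block. -/
def rows : JKBlock K → ℕ
  | jordan _ k => k + 1
  | jordanInf k => k + 1
  | horKron e => e
  | vertKron e => e + 1

/-- Number of columns of a block. -/
def cols : JKBlock K → ℕ
  | jordan _ k => k + 1
  | jordanInf k => k + 1
  | horKron e => e + 1
  | vertKron e => e

/-- The `A`-part of the canonical pencil `A + λ B` on a block. -/
def matA [Zero K] [One K] : (b : JKBlock K) → Matrix (Fin b.rows) (Fin b.cols) K
  | jordan l _ => Matrix.of fun i j =>
      if (j : ℕ) = (i : ℕ) then l else if (j : ℕ) = (i : ℕ) + 1 then 1 else 0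
  | jordanInf _ => Matrix.of fun i j => if (j : ℕ) = (i : ℕ) then 1 else 0
  | horKron _ => Matrix.of fun i j => if (j : ℕ) = (i : ℕ) then 1 else 0
  | vertKron _ => Matrix.of fun i j => if (i : ℕ) = (j : ℕ) then 1 else 0

/-- The `B`-part of the canonical pencil `A + λ B` on a block. -/
def matB [Zero K] [One K] : (b : JKBlock K) → Matrix (Fin b.rows) (Fin b.cols) K
  | jordan _ _ => Matrix.of fun i j => if (j : ℕ) = (i : ℕ) then 1 else 0
  | jordanInf _ => Matrix.of fun i j => if (j : ℕ) = (i : ℕ) + 1 then 1 else 0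
  | horKron _ => Matrix.of fun i j => if (j : ℕ) = (i : ℕ) + 1 then 1 else 0
  | vertKron _ => Matrix.of fun i j => if (i : ℕ) = (j : ℕ) + 1 then 1 else 0

/-- Is the block a horizontal Kronecker block? -/
def isHor : JKBlock K → Bool
  | horKron _ => true
  | _ => false

/-- Is the block a vertical Kronecker block? -/
def isVert : JKBlock K → Bool
  | vertKron _ => true
  | _ => false

/-- Is the block a Jordan block (with finite or infinite eigenvalue)? -/
def isJordanBlock : JKBlock K → Bool
  | jordan _ _ => true
  | jordanInf _ => true
  | _ => false

/-- The minimal column index of a horizontal Kronecker block. -/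
def horIndex : JKBlock K → Option ℕ
  | horKron e => some e
  | _ => none

/-- The minimal row index of a vertical Kronecker block. -/
def vertIndex : JKBlock K → Option ℕ
  | vertKron e => some e
  | _ => none

/-- The size of a Jordan block (`0` for Kronecker blocks). -/
def jordanSize : JKBlock K → ℕ
  | jordan _ k => k + 1
  | jordanInf k => k + 1
  | _ => 0

open scoped Classical in
/-- The size of a Jordan block with (finite) eigenvalue `l0` (`0` for other blocks). -/
noncomputable def jordanSizeAt (l0 : K) : JKBlock K → ℕ
  | jordan l k => if l = l0 then k + 1 else 0
  | _ => 0

/-- The size of a Jordan block with eigenvalue `∞` (`0` for other blocks). -/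
def jordanSizeInf : JKBlock K → ℕ
  | jordanInf k => k + 1
  | _ => 0

/-- The eigenvalue of a Jordan block, as a point of `KP¹ = K ∪ {∞}` (`some none` codes `∞`),
and `none` for Kronecker blocks. -/
def eigOf : JKBlock K → Option (Option K)
  | jordan l _ => some (some l)
  | jordanInf _ => some none
  | _ => none

end JKBlock

/-- The number of horizontal Kronecker blocks (= number of minimal column indices). -/
def countHor {K : Type*} (L : List (JKBlock K)) : ℕ := L.countP fun b => b.isHor

/-- The number of vertical Kronecker blocks (= number of minimal row indices). -/
def countVert {K : Type*} (L : List (JKBlock K)) : ℕ := L.countP fun b => b.isVert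

/-- The total Kronecker h-index: the total number of columns of horizontal Kronecker blocks,
`k_hor = Σ (ε_i + 1)`. -/
def khor {K : Type*} (L : List (JKBlock K)) : ℕ :=
  (L.map fun b => if b.isHor then b.cols else 0).sum

/-- The total Kronecker v-index: the total number of rows of vertical Kronecker blocks,
`k_vert = Σ (η_j + 1)`. -/
def kvert {K : Type*} (L : List (JKBlock K)) : ℕ :=
  (L.map fun b => if b.isVert then b.rows else 0).sum

/-- The multiset of minimal column indices. -/
def colIndices {K : Type*} (L : List (JKBlock K)) : Multiset ℕ :=
  ↑(L.filterMap JKBlock.horIndex)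

/-- The multiset of minimal row indices. -/
def rowIndices {K : Type*} (L : List (JKBlock K)) : Multiset ℕ :=
  ↑(L.filterMap JKBlock.vertIndex)

/-- The minimal column indices, sorted increasingly: `ε₁ ≤ ε₂ ≤ … ≤ ε_p`. -/
def colIdxSorted {K : Type*} (L : List (JKBlock K)) : List ℕ := (colIndices L).sort (· ≤ ·)

/-- The minimal row indices, sorted increasingly: `η₁ ≤ η₂ ≤ … ≤ η_q`. -/
def rowIdxSorted {K : Type*} (L : List (JKBlock K)) : List ℕ := (rowIndices L).sort (· ≤ ·)

/-- The total size of all Jordan blocks with eigenvalue `l0`. -/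
noncomputable def totalJordanAt {K : Type*} (L : List (JKBlock K)) (l0 : K) : ℕ :=
  (L.map (JKBlock.jordanSizeAt l0)).sum

/-- The total size of all Jordan blocks with eigenvalue `∞`. -/
def totalJordanInf {K : Type*} (L : List (JKBlock K)) : ℕ :=
  (L.map JKBlock.jordanSizeInf).sum

/-- The total size of all Jordan blocks. -/
def totalJordan {K : Type*} (L : List (JKBlock K)) : ℕ :=
  (L.map JKBlock.jordanSize).sum

/-- The `A`-part of the canonical block-diagonal pencil determined by a list of blocks. -/
def jkMatA {K : Type*} [Zero K] [One K] (L : List (JKBlock K)) :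
    Matrix ((i : Fin L.length) × Fin (L.get i).rows) ((i : Fin L.length) × Fin (L.get i).cols) K :=
  Matrix.blockDiagonal' fun i => (L.get i).matA

/-- The `B`-part of the canonical block-diagonal pencil determined by a list of blocks. -/
def jkMatB {K : Type*} [Zero K] [One K] (L : List (JKBlock K)) :
    Matrix ((i : Fin L.length) × Fin (L.get i).rows) ((i : Fin L.length) × Fin (L.get i).cols) K :=
  Matrix.blockDiagonal' fun i => (L.get i).matB

/-- `IsJKForm A B L` says that in suitable bases of `U` and `V` the matrices of the pencil
`A + λB` take the block-diagonal canonical form prescribed by the list of blocks `L`. -/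
def IsJKForm {K U V : Type*} [Field K] [AddCommGroup U] [Module K U]
    [AddCommGroup V] [Module K V] (A B : U →ₗ[K] V) (L : List (JKBlock K)) : Prop :=
  ∃ (bU : Basis ((i : Fin L.length) × Fin (L.get i).cols) K U)
    (bV : Basis ((i : Fin L.length) × Fin (L.get i).rows) K V),
    LinearMap.toMatrix bU bV A = jkMatA L ∧ LinearMap.toMatrix bU bV B = jkMatB L

/-- The rank of the pencil `{A + λB}`: the maximum of `rk (A + λB)` over `λ ∈ K`. -/
noncomputable def pencilRank {K U V : Type*} [Field K] [AddCommGroup U] [Module K U]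
    [AddCommGroup V] [Module K V] (A B : U →ₗ[K] V) : ℕ :=
  ⨆ lam : K, finrank K (LinearMap.range (A + lam • B))

/-- `λ` is a regular value of the pencil `{A + λB}` if `rk (A + λB)` equals the rank of the
pencil. -/
def IsRegularValue {K U V : Type*} [Field K] [AddCommGroup U] [Module K U]
    [AddCommGroup V] [Module K V] (A B : U →ₗ[K] V) (lam : K) : Prop :=
  finrank K (LinearMap.range (A + lam • B)) = pencilRank A B

/-- The set of all `r × r` minors of a matrix. -/
def matrixMinors {R : Type*} [CommRing R] {m n : ℕ} (M : Matrix (Fin m) (Fin n) R) (r : ℕ) :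
    Set R :=
  {d | ∃ (f : Fin r → Fin m) (g : Fin r → Fin n), StrictMono f ∧ StrictMono g ∧
        d = (M.submatrix f g).det}

/-- `d` is a greatest common divisor of the set `S`. -/
def IsGCDOf {R : Type*} [CommRing R] (S : Set R) (d : R) : Prop :=
  (∀ s ∈ S, d ∣ s) ∧ ∀ e : R, (∀ s ∈ S, e ∣ s) → e ∣ d

/-- The matrix `μ A + λ B` with formal variables `λ = X 0`, `μ = X 1`. -/
noncomputable def biPencil {R : Type*} [CommRing R] {m n : ℕ} (A B : Matrix (Fin m) (Fin n) R) :
    Matrix (Fin m) (Fin n) (MvPolynomial (Fin 2) R) :=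
  Matrix.of fun i j => X 1 * C (A i j) + X 0 * C (B i j)

open scoped Classical in
/-- The Möbius transformation of `KP¹ = K ∪ {∞}` (coded as `Option K`) induced by the change of
parameters `x' = αx + βa`, `a' = γx + δa` on the eigenvalues of Jordan blocks of pencils:
an eigenvalue `t` of the new pencil corresponds to eigenvalue `(δt − β)/(α − γt)` of the
original. -/
noncomputable def mobiusOpt {K : Type*} [Field K] (a b c d : K) : Option K → Option K :=
  fun t => match t with
    | some t' => if a - c * t' = 0 then none else some ((d * t' - b) / (a - c * t'))
    | none => if c = 0 then none else some (-d / c)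

/-- Transform Jordan block eigenvalues of a block by a map of `KP¹`, keeping sizes and
Kronecker blocks unchanged. -/
noncomputable def mapJKBlock {K : Type*} (f : Option K → Option K) : JKBlock K → JKBlock K
  | .jordan l k =>
      match f (some l) with
      | some l' => .jordan l' k
      | none => .jordanInf k
  | .jordanInf k =>
      match f none with
      | some l' => .jordan l' k
      | none => .jordanInf k
  | b => b

open scoped Classical in
/-- The "algebraic type" of a canonical block list: the collection of multisets of sizes of
Jordan blocks, one multiset for each distinct eigenvalue in `KP¹`, together with the multisets
of minimal column and row indices. -/
noncomputable def algType {K : Type*} (L : List (JKBlock K)) :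
    Multiset (Multiset ℕ) × Multiset ℕ × Multiset ℕ :=
  (((L.filterMap JKBlock.eigOf).toFinset.val).map
      (fun e => ↑(L.filterMap fun b => match b with
        | JKBlock.jordan l k => if (some l : Option K) = e then some (k + 1) else none
        | JKBlock.jordanInf k => if (none : Option K) = e then some (k + 1) else none
        | _ => none)),
    colIndices L, rowIndices L)

/-! ### Representations of Lie algebras -/

section Rep

variable {g : Type*} [LieRing g] [LieAlgebra ℂ g]
variable {V : Type*} [AddCommGroup V] [Module ℂ V]

/-- For a representation `ρ` of a Lie algebra `g` on `V` and `x ∈ V`, the linear operator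
`R_x : g → V`, `R_x ξ = ρ(ξ) x`. -/
def Rmap (ρ : g →ₗ⁅ℂ⁆ Module.End ℂ V) (x : V) : g →ₗ[ℂ] V :=
  ρ.toLinearMap.flip x

/-- The dimension of a regular (maximal-dimensional) orbit: `max_x rk R_x`. -/
noncomputable def dimOreg (ρ : g →ₗ⁅ℂ⁆ Module.End ℂ V) : ℕ :=
  ⨆ x : V, finrank ℂ (LinearMap.range (Rmap ρ x))

/-- A point `a ∈ V` is regular if its stabiliser has minimal dimension. -/
def IsRegularPoint (ρ : g →ₗ⁅ℂ⁆ Module.End ℂ V) (a : V) : Prop :=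
  ∀ x : V, finrank ℂ (LinearMap.ker (Rmap ρ a)) ≤ finrank ℂ (LinearMap.ker (Rmap ρ x))

/-- The dimension of the stabiliser of a regular point. -/
noncomputable def dimStReg (ρ : g →ₗ⁅ℂ⁆ Module.End ℂ V) : ℕ :=
  ⨅ x : V, finrank ℂ (LinearMap.ker (Rmap ρ x))

/-- The set of singular points: those where the rank of `R_x` drops. -/
def Sing (ρ : g →ₗ⁅ℂ⁆ Module.End ℂ V) : Set V :=
  {y | finrank ℂ (LinearMap.range (Rmap ρ y)) < dimOreg ρ}

/-- A function `W → ℂ` on a finite-dimensional complex vector space is polynomial if in some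
basis it is given by a polynomial in the coordinates. -/
def IsPolyMap {W : Type*} [AddCommGroup W] [Module ℂ W] (F : W → ℂ) : Prop :=
  ∃ (n : ℕ) (b : Basis (Fin n) ℂ W) (p : MvPolynomial (Fin n) ℂ),
    ∀ w : W, F w = eval (fun i => b.repr w i) p

/-- A pair `(x, a) ∈ V × V` is generic if it lies in a nonempty Zariski-open subset of `V × V`
(the nonvanishing set of a polynomial) on which the algebraic type of the pencil `R_{x+λa}`
is one and the same. -/
def GenericPair (ρ : g →ₗ⁅ℂ⁆ Module.End ℂ V) (x a : V) : Prop :=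
  ∃ F : V × V → ℂ, IsPolyMap F ∧ F (x, a) ≠ 0 ∧
    ∀ x₁ a₁ x₂ a₂ : V, F (x₁, a₁) ≠ 0 → F (x₂, a₂) ≠ 0 →
      ∀ L₁ L₂ : List (JKBlock ℂ),
        IsJKForm (Rmap ρ x₁) (Rmap ρ a₁) L₁ → IsJKForm (Rmap ρ x₂) (Rmap ρ a₂) L₂ →
          algType L₁ = algType L₂

/-- The matrix of `R_x` in bases `bg` of `g` and `bV` of `V`, with the entries viewed as
(linear) polynomials in the coordinates of `x`. -/
noncomputable def RmatPoly (ρ : g →ₗ⁅ℂ⁆ Module.End ℂ V) {N n : ℕ}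
    (bg : Basis (Fin N) ℂ g) (bV : Basis (Fin n) ℂ V) :
    Matrix (Fin n) (Fin N) (MvPolynomial (Fin n) ℂ) :=
  Matrix.of fun i j => ∑ k, X k * C ((LinearMap.toMatrix bg bV (Rmap ρ (bV k))) i j)

/-- The not-identically-zero `r × r` minors `p₁, …, p_N` of the matrix of `R_x`,
`r = dim O_reg`, viewed as polynomials on `V`. -/
def fundMinors (ρ : g →ₗ⁅ℂ⁆ Module.End ℂ V) {N n : ℕ}
    (bg : Basis (Fin N) ℂ g) (bV : Basis (Fin n) ℂ V) : Set (MvPolynomial (Fin n) ℂ) :=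
  {p | p ∈ matrixMinors (RmatPoly ρ bg bV) (dimOreg ρ) ∧ p ≠ 0}

/-- Membership in the set `Sing₁ = {h₁ = … = h_N = 0}`, where `p_i = p·h_i` and `p` is the
fundamental semi-invariant (a gcd of the nonzero `r × r` minors `p_i`). -/
def InSing1 (ρ : g →ₗ⁅ℂ⁆ Module.End ℂ V) {N n : ℕ}
    (bg : Basis (Fin N) ℂ g) (bV : Basis (Fin n) ℂ V)
    (p : MvPolynomial (Fin n) ℂ) (y : V) : Prop :=
  ∀ q ∈ fundMinors ρ bg bV, ∀ h : MvPolynomial (Fin n) ℂ,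
    q = p * h → eval (fun i => bV.repr y i) h = 0

/-- The singular set has codimension at least `2`: it contains no hypersurface, i.e. there is
no nonconstant polynomial all of whose zeros are singular points. -/
def SingCodimGe2 (ρ : g →ₗ⁅ℂ⁆ Module.End ℂ V) {n : ℕ} (bV : Basis (Fin n) ℂ V) : Prop :=
  ¬ ∃ q : MvPolynomial (Fin n) ℂ, 0 < q.totalDegree ∧
      ∀ y : V, eval (fun i => bV.repr y i) q = 0 → y ∈ Sing ρ

/-- A polynomial `f ∈ ℂ[V]` (in the coordinates given by `bV`) is an invariant of `ρ`:
`R_x^*(df(x)) = 0` for all `x`, i.e. the derivative of `f` along every vector field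
`x ↦ ρ(ξ)x` vanishes identically. -/
def IsInvariantPoly (ρ : g →ₗ⁅ℂ⁆ Module.End ℂ V) {n : ℕ} (bV : Basis (Fin n) ℂ V)
    (f : MvPolynomial (Fin n) ℂ) : Prop :=
  ∀ ξ : g, ∑ i, (∑ k, C ((LinearMap.toMatrix bV bV (ρ ξ)) i k) * X k) * pderiv i f = 0

/-- The differential `df(x)`, in the coordinates dual to `bV`. -/
noncomputable def gradVec {n : ℕ} (bV : Basis (Fin n) ℂ V) (f : MvPolynomial (Fin n) ℂ)
    (x : V) : Fin n → ℂ :=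
  fun i => eval (fun k => bV.repr x k) (pderiv i f)

/-- The span of the differentials at `x` of all polynomials in a set `S`. -/
noncomputable def gradSpan {n : ℕ} (bV : Basis (Fin n) ℂ V)
    (S : Set (MvPolynomial (Fin n) ℂ)) (x : V) : Submodule ℂ (Fin n → ℂ) :=
  Submodule.span ℂ {v | ∃ f ∈ S, v = gradVec bV f x}

/-- The linear functional on coordinate covectors given by pairing with `c`. -/
noncomputable def coordFunctional {n : ℕ} (c : Fin n → ℂ) : (Fin n → ℂ) →ₗ[ℂ] ℂ :=
  ∑ i, c i • LinearMap.proj i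

/-- `Ker R_y^* ⊂ V^*`, in the coordinates dual to `bV`: the covectors annihilating the image
of `R_y`, i.e. annihilating every `ρ(ξ) y`. -/
noncomputable def kerRdual (ρ : g →ₗ⁅ℂ⁆ Module.End ℂ V) {n : ℕ} (bV : Basis (Fin n) ℂ V)
    (y : V) : Submodule ℂ (Fin n → ℂ) :=
  ⨅ ξ : g, LinearMap.ker (coordFunctional fun i => bV.repr ((ρ ξ) y) i)

/-- `L_vert(x,a) = Σ_λ Ker R_{x+λa}^* ⊂ V^*`, the sum over all `λ` with `x + λa ∉ Sing`. -/
noncomputable def LvertSub (ρ : g →ₗ⁅ℂ⁆ Module.End ℂ V) {n : ℕ} (bV : Basis (Fin n) ℂ V)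
    (x a : V) : Submodule ℂ (Fin n → ℂ) :=
  ⨆ lam ∈ {lam : ℂ | x + lam • a ∉ Sing ρ}, kerRdual ρ bV (x + lam • a)

/-- A formal invariant of `ρ` at the point `a`: a formal power series
`G = Σ_j λ^j g_j(x)` with `g_j` homogeneous of degree `j` satisfying the formal identity
`(R_a + λ R_x)^* Σ_j λ^j dg_j(x) = 0`, written out coefficientwise in coordinates. -/
def IsFormalInvariantAt (ρ : g →ₗ⁅ℂ⁆ Module.End ℂ V) {n : ℕ} (bV : Basis (Fin n) ℂ V)
    (a : V) (gs : ℕ → MvPolynomial (Fin n) ℂ) : Prop :=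
  (∀ j, (gs j).IsHomogeneous j) ∧
  ∀ (ξ : g) (j : ℕ),
    (∑ i, C (bV.repr ((ρ ξ) a) i) * pderiv i (gs (j + 1))) +
      ∑ i, (∑ k, C ((LinearMap.toMatrix bV bV (ρ ξ)) i k) * X k) * pderiv i (gs j) = 0

/-- A complete set (a "basis") of formal invariants at `a`: formal invariants whose linear
components have differentials forming a basis of `Ker R_a^* ⊂ V^*`. -/
def IsCompleteFormalSet (ρ : g →ₗ⁅ℂ⁆ Module.End ℂ V) {n : ℕ} (bV : Basis (Fin n) ℂ V)
    (a : V) {q : ℕ} (Gs : Fin q → ℕ → MvPolynomial (Fin n) ℂ) : Prop :=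
  (∀ α, IsFormalInvariantAt ρ bV a (Gs α)) ∧
  LinearIndependent ℂ (fun α => fun i => MvPolynomial.coeff (Finsupp.single i 1) (Gs α 1)) ∧
  Submodule.span ℂ
      (Set.range fun α => fun i => MvPolynomial.coeff (Finsupp.single i 1) (Gs α 1))
    = kerRdual ρ bV a

/-- The transcendence degree of a subset of the polynomial algebra: the supremum of the
cardinalities of algebraically independent families contained in it. -/
noncomputable def setTrdeg {n : ℕ} (S : Set (MvPolynomial (Fin n) ℂ)) : ℕ :=
  sSup {m | ∃ f : Fin m → MvPolynomial (Fin n) ℂ, (∀ i, f i ∈ S) ∧ AlgebraicIndependent ℂ f}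

/-- The shift of a polynomial: `x ↦ f(x + λ a)`. -/
noncomputable def shiftPoly {n : ℕ} (bV : Basis (Fin n) ℂ V) (a : V) (lam : ℂ)
    (f : MvPolynomial (Fin n) ℂ) : MvPolynomial (Fin n) ℂ :=
  MvPolynomial.aeval (fun i => X i + C (lam * bV.repr a i)) f

/-- The subalgebra `Y_a ⊂ ℂ[V]` generated by the shifts `f(x + λa)` of polynomial invariants. -/
noncomputable def Ya (ρ : g →ₗ⁅ℂ⁆ Module.End ℂ V) {n : ℕ} (bV : Basis (Fin n) ℂ V) (a : V) :
    Subalgebra ℂ (MvPolynomial (Fin n) ℂ) :=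
  Algebra.adjoin ℂ {h | ∃ f, IsInvariantPoly ρ bV f ∧ ∃ lam : ℂ, h = shiftPoly bV a lam f}

end Rep

namespace JKAux

noncomputable section

variable {n N : ℕ}

/-- The span of the columns of a matrix. -/
def colSpan (A : Matrix (Fin n) (Fin N) ℂ) : Submodule ℂ (Fin n → ℂ) :=
  Submodule.span ℂ (Set.range Aᵀ)

lemma finrank_colSpan_eq_rank (A : Matrix (Fin n) (Fin N) ℂ) :
    finrank ℂ (colSpan A) = A.rank :=
  (Matrix.rank_eq_finrank_span_cols A).symm

/-- The "dot pairing" linear map into the dual. -/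
def dotL : (Fin n → ℂ) →ₗ[ℂ] Module.Dual ℂ (Fin n → ℂ) where
  toFun u :=
    { toFun := fun v => u ⬝ᵥ v
      map_add' := fun v w => dotProduct_add u v w
      map_smul' := fun c v => dotProduct_smul c u v }
  map_add' u w := by ext v; simp [add_dotProduct]
  map_smul' c u := by ext v; simp [smul_dotProduct]

@[simp] lemma dotL_apply (u v : Fin n → ℂ) : dotL u v = u ⬝ᵥ v := rfl

lemma dotL_surjective : Function.Surjective (dotL (n := n)) := by
  intro φ
  refine ⟨fun i => φ (fun j => if i = j then 1 else 0), ?_⟩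
  apply LinearMap.ext; intro v
  rw [dotL_apply, LinearMap.pi_apply_eq_sum_univ φ v]
  simp [dotProduct, mul_comm]

/-- If every dot-functional vanishing on `W` vanishes on `v`, then `v ∈ W`. -/
lemma mem_of_forall_dot (W : Submodule ℂ (Fin n → ℂ)) (v : Fin n → ℂ)
    (h : ∀ u : Fin n → ℂ, (∀ w ∈ W, u ⬝ᵥ w = 0) → u ⬝ᵥ v = 0) : v ∈ W := by
  by_contra hv
  have hq : W.mkQ v ≠ 0 := by
    simpa [Submodule.Quotient.mk_eq_zero] using hv
  have : ¬ ∀ ψ : Module.Dual ℂ ((Fin n → ℂ) ⧸ W), ψ (W.mkQ v) = 0 := by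
    intro hall
    exact hq ((Module.forall_dual_apply_eq_zero_iff ℂ _).mp hall)
  obtain ⟨ψ, hψ⟩ := not_forall.mp this
  obtain ⟨u, hu⟩ := dotL_surjective (ψ.comp W.mkQ)
  have h1 : ∀ w ∈ W, u ⬝ᵥ w = 0 := by
    intro w hw
    have hw0 : W.mkQ w = 0 := (Submodule.Quotient.mk_eq_zero _).mpr hw
    have : (ψ.comp W.mkQ) w = 0 := by
      rw [LinearMap.comp_apply, hw0, map_zero]
    rw [← dotL_apply u w, hu]
    exact this
  have h2 : u ⬝ᵥ v = ψ (W.mkQ v) := by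
    have := congrArg (fun f : Module.Dual ℂ (Fin n → ℂ) => f v) hu
    simpa using this
  exact hψ (h2 ▸ h u h1)

/-- Extract an injective subfamily of prescribed size that is linearly independent,
from a family whose span has big enough rank. -/
lemma exists_indep_subfamily {ι V : Type*} [AddCommGroup V] [Module ℂ V]
    [FiniteDimensional ℂ V] (v : ι → V) (s : ℕ)
    (hs : s ≤ finrank ℂ (Submodule.span ℂ (Set.range v))) :
    ∃ g : Fin s → ι, Function.Injective g ∧ LinearIndependent ℂ (v ∘ g) := by
  obtain ⟨b, hbsub, hbspan, hbind⟩ := exists_linearIndependent ℂ (Set.range v)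
  have hbfin : b.Finite := hbind.setFinite
  haveI : Fintype b := hbfin.fintype
  have hcard : finrank ℂ (Submodule.span ℂ b) = Fintype.card b := by
    rw [finrank_span_set_eq_card hbind, Set.toFinset_card]
  have hs' : s ≤ Fintype.card b := by
    rw [← hcard, hbspan]; exact hs
  obtain ⟨emb⟩ : Nonempty (Fin s ↪ b) :=
    Function.Embedding.nonempty_of_card_le (by simpa using hs')
  have hpre : ∀ k : Fin s, ∃ i : ι, v i = (emb k : V) := fun k => hbsub (emb k).2
  choose g hg using hpre
  refine ⟨g, ?_, ?_⟩
  · intro k k' hkk'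
    have : (emb k : V) = (emb k' : V) := by rw [← hg k, ← hg k', hkk']
    exact emb.injective (Subtype.ext this)
  · have : v ∘ g = (fun (x : b) => (x : V)) ∘ emb := by
      funext k; simp [Function.comp, hg k]
    rw [this]
    exact hbind.comp emb emb.injective


/-- From column span rank `≥ s`, extract an invertible `s × s` submatrix. -/
lemma exists_submatrix_det_ne_zero (A : Matrix (Fin n) (Fin N) ℂ) (s : ℕ)
    (hs : s ≤ finrank ℂ (colSpan A)) :
    ∃ (f : Fin s → Fin n) (g : Fin s → Fin N), (A.submatrix f g).det ≠ 0 := by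
  obtain ⟨g, hg, hind⟩ := exists_indep_subfamily Aᵀ s hs
  set B : Matrix (Fin n) (Fin s) ℂ := A.submatrix id g with hB
  have hBT : Bᵀ = Aᵀ ∘ g := by
    funext j i; rfl
  have hrankB : B.rank = s := by
    rw [Matrix.rank_eq_finrank_span_cols, show B.col = Aᵀ ∘ g from hBT, finrank_span_eq_card hind, Fintype.card_fin]
  have hrows : s ≤ finrank ℂ (Submodule.span ℂ (Set.range (fun i : Fin n => B i))) := by
    have h1 : Bᵀ.rank = s := by rw [Matrix.rank_transpose, hrankB]
    have h2 : Bᵀ.rank = finrank ℂ (Submodule.span ℂ (Set.range Bᵀᵀ)) :=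
      Matrix.rank_eq_finrank_span_cols _
    rw [h1] at h2
    have : Bᵀᵀ = fun i : Fin n => B i := by funext i j; rfl
    rw [this] at h2
    exact le_of_eq h2
  obtain ⟨f, hf, hindr⟩ := exists_indep_subfamily (fun i : Fin n => B i) s hrows
  refine ⟨f, g, ?_⟩
  have hQ : (A.submatrix f g) = B.submatrix f id := by
    funext i j; rfl
  have hQrows : LinearIndependent ℂ (fun i : Fin s => (A.submatrix f g) i) := by
    have : (fun i : Fin s => (A.submatrix f g) i) = (fun i : Fin n => B i) ∘ f := by
      funext i; funext j; rfl
    rw [this]; exact hindr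
  have := Matrix.linearIndependent_rows_iff_isUnit.mp hQrows
  exact (Matrix.isUnit_iff_isUnit_det _).mp this |>.ne_zero

/-- An invertible `s × s` submatrix forces column span rank `≥ s`. -/
lemma le_finrank_colSpan_of_det (A : Matrix (Fin n) (Fin N) ℂ) (s : ℕ)
    (f : Fin s → Fin n) (g : Fin s → Fin N) (h : (A.submatrix f g).det ≠ 0) :
    s ≤ finrank ℂ (colSpan A) := by
  set π : (Fin n → ℂ) →ₗ[ℂ] (Fin s → ℂ) := LinearMap.funLeft ℂ ℂ f with hπ
  set Q : Matrix (Fin s) (Fin s) ℂ := A.submatrix f g with hQdef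
  have hQcols : LinearIndependent ℂ (fun j : Fin s => Qᵀ j) :=
    Matrix.linearIndependent_cols_iff_isUnit.mpr
      ((Matrix.isUnit_iff_isUnit_det _).mpr (isUnit_iff_ne_zero.mpr h))
  have hfr : finrank ℂ (Submodule.span ℂ (Set.range Qᵀ)) = s := by
    rw [finrank_span_eq_card hQcols, Fintype.card_fin]
  have hle : Submodule.span ℂ (Set.range Qᵀ) ≤ Submodule.map π (colSpan A) := by
    rw [Submodule.span_le]
    rintro - ⟨j, rfl⟩
    refine ⟨Aᵀ (g j), Submodule.subset_span ⟨g j, rfl⟩, ?_⟩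
    funext i; rfl
  calc s = finrank ℂ (Submodule.span ℂ (Set.range Qᵀ)) := hfr.symm
    _ ≤ finrank ℂ (Submodule.map π (colSpan A)) := Submodule.finrank_mono hle
    _ ≤ finrank ℂ (colSpan A) := Submodule.finrank_map_le π (colSpan A)

/-- Determinants of evaluated polynomial-matrix submatrices are evaluations of a polynomial. -/
lemma det_submatrix_map_eval (P : Matrix (Fin n) (Fin N) (Polynomial ℂ)) (lam : ℂ)
    {s : ℕ} (f : Fin s → Fin n) (g : Fin s → Fin N) :
    ((P.map (Polynomial.eval lam)).submatrix f g).det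
      = Polynomial.eval lam (P.submatrix f g).det := by
  have h1 : (P.map (Polynomial.eval lam)).submatrix f g
      = (P.submatrix f g).map (Polynomial.eval lam) := rfl
  rw [h1]
  exact ((Polynomial.evalRingHom lam).map_det (P.submatrix f g)).symm

/-- Cofiniteness of the set of `lam` where the column rank stays `≥ r`. -/
lemma cofinite_rank_ge (P : Matrix (Fin n) (Fin N) (Polynomial ℂ)) (r : ℕ) (lam0 : ℂ)
    (h0 : r ≤ finrank ℂ (colSpan (P.map (Polynomial.eval lam0)))) :
    {lam : ℂ | r ≤ finrank ℂ (colSpan (P.map (Polynomial.eval lam)))}ᶜ.Finite := by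
  obtain ⟨f, g, hdet⟩ := exists_submatrix_det_ne_zero (P.map (Polynomial.eval lam0)) r h0
  rw [det_submatrix_map_eval] at hdet
  set q : Polynomial ℂ := (P.submatrix f g).det with hq
  have hq0 : q ≠ 0 := by
    intro hqz
    rw [hqz, Polynomial.eval_zero] at hdet
    exact hdet rfl
  have hsub : {lam : ℂ | r ≤ finrank ℂ (colSpan (P.map (Polynomial.eval lam)))}ᶜ
      ⊆ {lam : ℂ | q.IsRoot lam} := by
    intro lam hlam
    simp only [Set.mem_compl_iff, Set.mem_setOf_eq, not_le] at hlam
    by_contra hroot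
    have : r ≤ finrank ℂ (colSpan (P.map (Polynomial.eval lam))) := by
      apply le_finrank_colSpan_of_det _ r f g
      rw [det_submatrix_map_eval]
      exact hroot
    omega
  exact Set.Finite.subset (Polynomial.finite_setOf_isRoot hq0) hsub


/-- The kernel `K(M) = {v | Mᵀ v = 0}`, i.e. vectors dot-orthogonal to all columns. -/
def kerT (M : Matrix (Fin n) (Fin N) ℂ) : Submodule ℂ (Fin n → ℂ) :=
  LinearMap.ker Mᵀ.mulVecLin

lemma mem_kerT_iff (M : Matrix (Fin n) (Fin N) ℂ) (v : Fin n → ℂ) :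
    v ∈ kerT M ↔ ∀ j : Fin N, Mᵀ j ⬝ᵥ v = 0 := by
  have hrfl : ∀ j, (Mᵀ.mulVecLin v) j = Mᵀ j ⬝ᵥ v := fun j => rfl
  constructor
  · intro h j
    rw [← hrfl j, LinearMap.mem_ker.mp h]
    rfl
  · intro h
    refine LinearMap.mem_ker.mpr ?_
    funext j
    rw [hrfl j, h j]
    rfl

lemma col_dot_eq_zero_of_mem_kerT (M : Matrix (Fin n) (Fin N) ℂ) {v : Fin n → ℂ}
    (hv : v ∈ kerT M) {u : Fin n → ℂ} (hu : u ∈ colSpan M) : u ⬝ᵥ v = 0 := by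
  have : ∀ w ∈ Set.range Mᵀ, w ⬝ᵥ v = 0 := by
    rintro - ⟨j, rfl⟩
    exact (mem_kerT_iff M v).mp hv j
  -- linear functional w ↦ w ⬝ᵥ v vanishes on generators
  have hlin : u ∈ Submodule.span ℂ (Set.range Mᵀ) := hu
  refine Submodule.span_induction (p := fun w _ => w ⬝ᵥ v = 0)
    (fun w hw => this w hw) (by simp) ?_ ?_ hlin
  · intro w₁ w₂ _ _ h₁ h₂; rw [add_dotProduct, h₁, h₂, add_zero]
  · intro c w _ hw; rw [smul_dotProduct, hw, smul_zero]

lemma finrank_kerT (M : Matrix (Fin n) (Fin N) ℂ) :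
    finrank ℂ (kerT M) + finrank ℂ (colSpan M) = n := by
  have h1 : finrank ℂ (LinearMap.range Mᵀ.mulVecLin) + finrank ℂ (kerT M)
      = finrank ℂ (Fin n → ℂ) := LinearMap.finrank_range_add_finrank_ker Mᵀ.mulVecLin
  have h2 : finrank ℂ (LinearMap.range Mᵀ.mulVecLin) = Mᵀ.rank := rfl
  have h3 : Mᵀ.rank = M.rank := Matrix.rank_transpose M
  have h4 : finrank ℂ (Fin n → ℂ) = n := by simp
  rw [finrank_colSpan_eq_rank, ← h3, ← h2]
  omega

/-- `colSpan M` is exactly the set of vectors dot-orthogonal to `kerT M`. -/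
lemma mem_colSpan_of_dot_kerT (M : Matrix (Fin n) (Fin N) ℂ) (u : Fin n → ℂ)
    (hu : ∀ v ∈ kerT M, u ⬝ᵥ v = 0) : u ∈ colSpan M := by
  set K := kerT M with hK
  set Θ : (Fin n → ℂ) →ₗ[ℂ] Module.Dual ℂ K := K.dualRestrict.comp dotL with hΘ
  have hΘsurj : Function.Surjective Θ := by
    exact (Subspace.dualRestrict_surjective).comp dotL_surjective
  have hker : ∀ w : Fin n → ℂ, w ∈ LinearMap.ker Θ ↔ ∀ v ∈ K, w ⬝ᵥ v = 0 := by
    intro w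
    constructor
    · intro hw v hv
      have := congrArg (fun φ : Module.Dual ℂ K => φ ⟨v, hv⟩) (LinearMap.mem_ker.mp hw)
      simpa [hΘ, Submodule.dualRestrict_apply, dotL_apply] using this
    · intro hw
      refine LinearMap.mem_ker.mpr ?_
      apply LinearMap.ext
      rintro ⟨v, hv⟩
      rw [hΘ]
      simp only [LinearMap.comp_apply, Submodule.dualRestrict_apply, LinearMap.zero_apply]
      rw [dotL_apply]
      exact hw v hv
  have hcle : colSpan M ≤ LinearMap.ker Θ := by
    intro w hw
    rw [hker]
    intro v hv
    exact col_dot_eq_zero_of_mem_kerT M hv hw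
  have hrk : finrank ℂ (LinearMap.ker Θ) = finrank ℂ (colSpan M) := by
    have h1 : finrank ℂ (LinearMap.range Θ) + finrank ℂ (LinearMap.ker Θ)
        = finrank ℂ (Fin n → ℂ) := LinearMap.finrank_range_add_finrank_ker Θ
    have h2 : LinearMap.range Θ = ⊤ := LinearMap.range_eq_top.mpr hΘsurj
    have h3 : finrank ℂ (Module.Dual ℂ K) = finrank ℂ K := Subspace.dual_finrank_eq
    have h4 : finrank ℂ (kerT M) + finrank ℂ (colSpan M) = n := finrank_kerT M
    have h5 : finrank ℂ (Fin n → ℂ) = n := by simp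
    rw [h2, finrank_top, h3] at h1
    rw [← hK] at h4
    omega
  have : colSpan M = LinearMap.ker Θ :=
    Submodule.eq_of_le_of_finrank_le hcle (le_of_eq hrk)
  rw [this, hker]
  exact hu

/-- Membership in column spans propagates along a pencil from a cofinite set to any
point where the rank is maximal. -/
lemma mem_colSpan_limit (P : Matrix (Fin n) (Fin N) (Polynomial ℂ)) (r : ℕ) (u : Fin n → ℂ)
    (S : Set ℂ) (hS : S.Infinite)
    (hmem : ∀ lam ∈ S, u ∈ colSpan (P.map (Polynomial.eval lam)))
    (hrk : ∀ lam ∈ S, finrank ℂ (colSpan (P.map (Polynomial.eval lam))) ≤ r)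
    (lam0 : ℂ) (h0 : r ≤ finrank ℂ (colSpan (P.map (Polynomial.eval lam0)))) :
    u ∈ colSpan (P.map (Polynomial.eval lam0)) := by
  by_contra hu
  -- augmented polynomial matrix with constant column u
  set Paug : Matrix (Fin n) (Fin (N + 1)) (Polynomial ℂ) :=
    Matrix.of (fun i j => Fin.lastCases (Polynomial.C (u i)) (fun j' => P i j') j) with hPaug
  have haugT : ∀ lam : ℂ, Set.range (Paug.map (Polynomial.eval lam))ᵀ
      = Set.range (P.map (Polynomial.eval lam))ᵀ ∪ {u} := by
    intro lam
    ext w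
    constructor
    · rintro ⟨j, rfl⟩
      refine Fin.lastCases ?_ (fun j' => ?_) j
      · right
        simp only [Set.mem_singleton_iff]
        funext i
        simp [hPaug, Matrix.transpose_apply, Matrix.map_apply]
      · left
        refine ⟨j', ?_⟩
        funext i
        simp [hPaug, Matrix.transpose_apply, Matrix.map_apply]
    · rintro (⟨j, rfl⟩ | hw)
      · refine ⟨Fin.castSucc j, ?_⟩
        funext i
        simp [hPaug, Matrix.transpose_apply, Matrix.map_apply]
      · refine ⟨Fin.last N, ?_⟩
        funext i
        simp only [Set.mem_singleton_iff] at hw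
        subst hw
        simp [hPaug, Matrix.transpose_apply, Matrix.map_apply]
  have hcolaug : ∀ lam : ℂ, colSpan (Paug.map (Polynomial.eval lam))
      = colSpan (P.map (Polynomial.eval lam)) ⊔ Submodule.span ℂ {u} := by
    intro lam
    rw [colSpan, haugT lam, Submodule.span_union]
    rfl
  -- at lam0, the augmented rank is ≥ r+1
  have hstrict : colSpan (P.map (Polynomial.eval lam0))
      < colSpan (Paug.map (Polynomial.eval lam0)) := by
    rw [hcolaug lam0]
    refine lt_of_le_of_ne le_sup_left ?_
    intro hEq
    apply hu
    rw [hEq]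
    exact Submodule.mem_sup_right (Submodule.mem_span_singleton_self u)
  have haug0 : r + 1 ≤ finrank ℂ (colSpan (Paug.map (Polynomial.eval lam0))) := by
    have := Submodule.finrank_lt_finrank_of_lt hstrict
    omega
  obtain ⟨f, g, hdet⟩ := exists_submatrix_det_ne_zero _ (r + 1) haug0
  rw [det_submatrix_map_eval] at hdet
  have hq0 : (Paug.submatrix f g).det ≠ 0 := by
    intro hqz; rw [hqz, Polynomial.eval_zero] at hdet; exact hdet rfl
  have hfin : {lam : ℂ | (Polynomial.eval lam (Paug.submatrix f g).det) = 0}.Finite :=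
    Polynomial.finite_setOf_isRoot hq0
  obtain ⟨lam, hlamS, hlamq⟩ : ∃ lam ∈ S, Polynomial.eval lam (Paug.submatrix f g).det ≠ 0 := by
    have := (hS.diff hfin).nonempty
    obtain ⟨lam, hlam⟩ := this
    exact ⟨lam, hlam.1, hlam.2⟩
  have hrklam : r + 1 ≤ finrank ℂ (colSpan (Paug.map (Polynomial.eval lam))) := by
    apply le_finrank_colSpan_of_det _ (r + 1) f g
    rw [det_submatrix_map_eval]
    exact hlamq
  have habs : colSpan (Paug.map (Polynomial.eval lam)) = colSpan (P.map (Polynomial.eval lam)) := by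
    rw [hcolaug lam]
    refine sup_eq_left.mpr ?_
    rw [Submodule.span_le, Set.singleton_subset_iff]
    exact hmem lam hlamS
  rw [habs] at hrklam
  have := hrk lam hlamS
  omega

/-- A polynomial curve lying in a subspace for infinitely many parameters lies in it always. -/
lemma curve_mem_of_infinite (W : Submodule ℂ (Fin n → ℂ)) (p : Fin n → Polynomial ℂ)
    (S : Set ℂ) (hS : S.Infinite)
    (hmem : ∀ lam ∈ S, (fun i => (p i).eval lam) ∈ W) (lam0 : ℂ) :
    (fun i => (p i).eval lam0) ∈ W := by
  apply mem_of_forall_dot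
  intro u hu
  set q : Polynomial ℂ := ∑ i, Polynomial.C (u i) * p i with hq
  have hqeval : ∀ lam : ℂ, q.eval lam = u ⬝ᵥ (fun i => (p i).eval lam) := by
    intro lam
    simp [hq, Polynomial.eval_finset_sum, dotProduct]
  have hqzero : q = 0 := by
    apply Polynomial.eq_zero_of_infinite_isRoot
    apply Set.Infinite.mono ?_ hS
    intro lam hlam
    simp only [Set.mem_setOf_eq, Polynomial.IsRoot.def]
    rw [hqeval lam]
    exact hu _ (hmem lam hlam)
  have := hqeval lam0
  rw [hqzero, Polynomial.eval_zero] at this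
  exact this.symm


/-- Coordinate gradient of a polynomial at a point. -/
def gradc (f : MvPolynomial (Fin n) ℂ) (xc : Fin n → ℂ) : Fin n → ℂ :=
  fun i => eval xc (pderiv i f)

lemma gradc_add (f g : MvPolynomial (Fin n) ℂ) (xc : Fin n → ℂ) :
    gradc (f + g) xc = gradc f xc + gradc g xc := by
  funext i; simp [gradc]

lemma gradc_mul (f g : MvPolynomial (Fin n) ℂ) (xc : Fin n → ℂ) :
    gradc (f * g) xc = eval xc f • gradc g xc + eval xc g • gradc f xc := by
  funext i
  simp only [gradc, pderiv_mul, _root_.map_add, _root_.map_mul, Pi.add_apply, Pi.smul_apply, smul_eq_mul]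
  ring

lemma gradc_C (r : ℂ) (xc : Fin n → ℂ) : gradc (C r : MvPolynomial (Fin n) ℂ) xc = 0 := by
  funext i; simp [gradc]

/-- Gradients of members of an adjoined subalgebra stay in any submodule containing the
gradients of the generators. -/
lemma gradc_adjoin_mem (S : Set (MvPolynomial (Fin n) ℂ)) (xc : Fin n → ℂ)
    (W : Submodule ℂ (Fin n → ℂ)) (hgen : ∀ f ∈ S, gradc f xc ∈ W) :
    ∀ h ∈ Algebra.adjoin ℂ S, gradc h xc ∈ W := by
  intro h hh
  induction hh using Algebra.adjoin_induction with
  | mem f hf => exact hgen f hf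
  | algebraMap r =>
      have : (algebraMap ℂ (MvPolynomial (Fin n) ℂ)) r = C r := rfl
      rw [this, gradc_C]
      exact W.zero_mem
  | add p q _ _ hp hq => rw [gradc_add]; exact W.add_mem hp hq
  | mul p q _ _ hp hq =>
      rw [gradc_mul]
      exact W.add_mem (W.smul_mem _ hq) (W.smul_mem _ hp)

/-- Partial derivatives commute with translation substitutions. -/
lemma pderiv_aeval_shift (c : Fin n → ℂ) (f : MvPolynomial (Fin n) ℂ) (i : Fin n) :
    pderiv i (aeval (fun j => X j + C (c j)) f)
      = aeval (fun j => X j + C (c j)) (pderiv i f) := by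
  induction f using MvPolynomial.induction_on with
  | C a => simp
  | add p q hp hq => simp only [_root_.map_add, hp, hq]
  | mul_X p j hp =>
      by_cases hij : i = j
      · subst hij
        simp only [_root_.map_mul, _root_.map_add, aeval_X, aeval_C, pderiv_mul, pderiv_X_self,
          pderiv_C, add_zero, mul_one, hp]
      · simp only [_root_.map_mul, _root_.map_add, aeval_X, aeval_C, pderiv_mul,
          pderiv_X_of_ne (Ne.symm hij), pderiv_C, add_zero, mul_zero, hp]

/-- Evaluation after substitution. -/
lemma eval_aeval (v : Fin n → ℂ) (σ : Fin n → MvPolynomial (Fin n) ℂ)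
    (f : MvPolynomial (Fin n) ℂ) :
    eval v (aeval σ f) = eval (fun j => eval v (σ j)) f := by
  induction f using MvPolynomial.induction_on with
  | C a => rw [aeval_C]; simp
  | add p q hp hq => simp only [_root_.map_add, hp, hq]
  | mul_X p j hp => rw [_root_.map_mul, _root_.map_mul, aeval_X, hp, _root_.map_mul, eval_X]

/-- Evaluating the polynomial-in-λ substitution. -/
lemma eval_aeval_poly (xc ac : Fin n → ℂ) (p : MvPolynomial (Fin n) ℂ) (lam : ℂ) :
    Polynomial.eval lam
        (MvPolynomial.aeval
          (fun k => Polynomial.C (xc k) + Polynomial.X * Polynomial.C (ac k)) p)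
      = eval (fun k => xc k + lam * ac k) p := by
  induction p using MvPolynomial.induction_on with
  | C a => rw [aeval_C]; simp
  | add p q hp hq => rw [_root_.map_add, Polynomial.eval_add, hp, hq, _root_.map_add]
  | mul_X p j hp =>
      rw [_root_.map_mul, aeval_X, Polynomial.eval_mul, hp, Polynomial.eval_add,
        Polynomial.eval_C, Polynomial.eval_mul, Polynomial.eval_X, Polynomial.eval_C,
        _root_.map_mul, eval_X]


end

end JKAux

/-! ### STATEMENT 14: differentials of shifted invariants span `L_vert(x,a)` -/

/-- Assume `ρ` has a complete set of polynomial invariants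
(`trdeg ℂ[V]^g = codim O_reg`) and let `x ∈ V` be a regular element at which the differentials
of the polynomial invariants span a subspace of dimension `codim O_x = trdeg ℂ[V]^g`, such that
the plane `span(x, a)` is not contained in `Sing`.  Then
`span{df(x) : f ∈ Y_a} = L_vert(x, a)`. -/
theorem Ya_differentials_span_Lvert
    {g : Type} [LieRing g] [LieAlgebra ℂ g] [Module.Finite ℂ g]
    {V : Type} [AddCommGroup V] [Module ℂ V] [FiniteDimensional ℂ V]
    (ρ : g →ₗ⁅ℂ⁆ Module.End ℂ V) {n : ℕ} (bV : Basis (Fin n) ℂ V)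
    (hcomplete : setTrdeg {f | IsInvariantPoly ρ bV f} = finrank ℂ V - dimOreg ρ)
    (x a : V) (hx : IsRegularPoint ρ x)
    (hdx : finrank ℂ ↥(gradSpan bV {f | IsInvariantPoly ρ bV f} x)
      = finrank ℂ V - finrank ℂ (LinearMap.range (Rmap ρ x)))
    (hplane : ¬ (↑(Submodule.span ℂ ({x, a} : Set V)) : Set V) ⊆ Sing ρ) :
    gradSpan bV (↑(Ya ρ bV a) : Set (MvPolynomial (Fin n) ℂ)) x = LvertSub ρ bV x a := by
  classical
  have hnV : finrank ℂ V = n := by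
    rw [finrank_eq_card_basis bV, Fintype.card_fin]
  set NN : ℕ := finrank ℂ g with hNN
  let bg : Basis (Fin NN) ℂ g := Module.finBasis ℂ g
  set r : ℕ := dimOreg ρ with hrdef
  set xc : Fin n → ℂ := fun k => bV.repr x k with hxc
  set ac : Fin n → ℂ := fun k => bV.repr a k with hac
  have hRmap : ∀ (y : V) (ξ : g), Rmap ρ y ξ = (ρ ξ) y := fun y ξ => rfl
  have hcoord : ∀ cvec v : Fin n → ℂ, coordFunctional cvec v = cvec ⬝ᵥ v := by
    intro cvec v
    simp [coordFunctional, dotProduct, LinearMap.sum_apply, LinearMap.smul_apply,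
      LinearMap.proj_apply, smul_eq_mul]
  set P : Matrix (Fin n) (Fin NN) (Polynomial ℂ) := Matrix.of (fun i j =>
      Polynomial.C (bV.repr ((ρ (bg j)) x) i)
        + Polynomial.X * Polynomial.C (bV.repr ((ρ (bg j)) a) i)) with hP
  have hMtoMatrix : ∀ lam : ℂ,
      P.map (Polynomial.eval lam) = LinearMap.toMatrix bg bV (Rmap ρ (x + lam • a)) := by
    intro lam
    ext i j
    have hval : (Rmap ρ (x + lam • a)) (bg j) = (ρ (bg j)) x + lam • (ρ (bg j)) a := by
      rw [hRmap, _root_.map_add, _root_.map_smul]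
    rw [LinearMap.toMatrix_apply, hval, _root_.map_add, _root_.map_smul]
    rw [hP]
    simp only [Matrix.map_apply, Matrix.of_apply, Polynomial.eval_add, Polynomial.eval_mul,
      Polynomial.eval_C, Polynomial.eval_X, Finsupp.coe_add, Finsupp.coe_smul, Pi.add_apply,
      Pi.smul_apply, smul_eq_mul]
    try ring
  have hrankmat : ∀ y : V, (LinearMap.toMatrix bg bV (Rmap ρ y)).rank
      = finrank ℂ (LinearMap.range (Rmap ρ y)) := by
    intro y
    rw [Matrix.rank_eq_finrank_range_toLin (LinearMap.toMatrix bg bV (Rmap ρ y)) bV bg,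
      Matrix.toLin_toMatrix]
  have hbound : ∀ y : V, finrank ℂ (LinearMap.range (Rmap ρ y)) ≤ r := by
    intro y
    rw [hrdef, dimOreg]
    apply le_ciSup (f := fun z : V => finrank ℂ (LinearMap.range (Rmap ρ z)))
    refine ⟨finrank ℂ V, ?_⟩
    rintro - ⟨z, rfl⟩
    exact Submodule.finrank_le _
  have hrx : finrank ℂ (LinearMap.range (Rmap ρ x)) = r := by
    refine le_antisymm (hbound x) ?_
    rw [hrdef, dimOreg]
    refine ciSup_le fun y => ?_
    have e1 := LinearMap.finrank_range_add_finrank_ker (Rmap ρ x)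
    have e2 := LinearMap.finrank_range_add_finrank_ker (Rmap ρ y)
    have e3 := hx y
    omega
  have hrn : r ≤ n := by
    rw [← hrx, ← hnV]
    exact Submodule.finrank_le _
  have hcol : ∀ lam : ℂ, finrank ℂ (JKAux.colSpan (P.map (Polynomial.eval lam)))
      = finrank ℂ (LinearMap.range (Rmap ρ (x + lam • a))) := by
    intro lam
    rw [JKAux.finrank_colSpan_eq_rank, hMtoMatrix lam, hrankmat]
  have hcolbound : ∀ lam : ℂ, finrank ℂ (JKAux.colSpan (P.map (Polynomial.eval lam))) ≤ r := by
    intro lam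
    rw [hcol lam]
    exact hbound _
  set Reg : Set ℂ := {lam : ℂ | x + lam • a ∉ Sing ρ} with hReg
  have hRegIff : ∀ lam : ℂ, lam ∈ Reg ↔
      finrank ℂ (JKAux.colSpan (P.map (Polynomial.eval lam))) = r := by
    intro lam
    have hb := hbound (x + lam • a)
    constructor
    · intro h
      have h2 : ¬ (finrank ℂ (LinearMap.range (Rmap ρ (x + lam • a))) < dimOreg ρ) := h
      rw [← hrdef] at h2
      rw [hcol]
      omega
    · intro h
      rw [hcol] at h
      intro hsing
      have h2 : finrank ℂ (LinearMap.range (Rmap ρ (x + lam • a))) < dimOreg ρ := hsing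
      rw [← hrdef] at h2
      omega
  have h0reg : (0:ℂ) ∈ Reg := by
    rw [hRegIff, hcol]
    have hx0 : x + (0:ℂ) • a = x := by rw [zero_smul, add_zero]
    rw [hx0, hrx]
  have hRegCofinite : Regᶜ.Finite := by
    have h0 : r ≤ finrank ℂ (JKAux.colSpan (P.map (Polynomial.eval (0:ℂ)))) :=
      le_of_eq ((hRegIff 0).mp h0reg).symm
    have hfin := JKAux.cofinite_rank_ge P r 0 h0
    refine Set.Finite.subset hfin ?_
    intro lam hlam
    simp only [Set.mem_compl_iff, Set.mem_setOf_eq, not_le] at hlam ⊢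
    have hne : finrank ℂ (JKAux.colSpan (P.map (Polynomial.eval lam))) ≠ r :=
      fun hEq => hlam ((hRegIff lam).mpr hEq)
    have hb := hcolbound lam
    omega
  have hRegInf : Reg.Infinite := by
    rw [← compl_compl Reg]
    exact hRegCofinite.infinite_compl
  have hkerT : ∀ y : V, kerRdual ρ bV y
      = JKAux.kerT (LinearMap.toMatrix bg bV (Rmap ρ y)) := by
    intro y
    ext v
    rw [JKAux.mem_kerT_iff]
    have hcolm : ∀ j, (LinearMap.toMatrix bg bV (Rmap ρ y))ᵀ j
        = fun i => bV.repr ((ρ (bg j)) y) i := by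
      intro j
      funext i
      rw [Matrix.transpose_apply, LinearMap.toMatrix_apply, hRmap]
    constructor
    · intro h j
      have hξ : v ∈ LinearMap.ker (coordFunctional fun i => bV.repr ((ρ (bg j)) y) i) :=
        (Submodule.mem_iInf _).mp h (bg j)
      rw [LinearMap.mem_ker, hcoord] at hξ
      rw [hcolm j]
      exact hξ
    · intro h
      refine (Submodule.mem_iInf _).mpr fun ξ => ?_
      rw [LinearMap.mem_ker, hcoord]
      set ℓ : g →ₗ[ℂ] ℂ :=
        ((JKAux.dotL).flip v).comp (bV.equivFun.toLinearMap.comp (Rmap ρ y)) with hℓ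
      have hℓval : ∀ ζ : g, ℓ ζ = (fun i => bV.repr ((ρ ζ) y) i) ⬝ᵥ v := by
        intro ζ
        rw [hℓ]
        simp only [LinearMap.comp_apply, LinearMap.flip_apply, JKAux.dotL_apply,
          LinearEquiv.coe_coe, Basis.equivFun_apply]
        rfl
      have hzero : ℓ = 0 := by
        apply bg.ext
        intro j
        have hj := h j
        rw [hcolm j] at hj
        rw [hℓval (bg j)]
        simpa using hj
      have h0 : ℓ ξ = 0 := by rw [hzero]; rfl
      rw [← hℓval ξ]
      exact h0
  have hinv_mem : ∀ f : MvPolynomial (Fin n) ℂ, IsInvariantPoly ρ bV f → ∀ y : V,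
      JKAux.gradc f (fun k => bV.repr y k) ∈ kerRdual ρ bV y := by
    intro f hf y
    rw [hkerT y, JKAux.mem_kerT_iff]
    intro j
    have hid := hf (bg j)
    have h2 : ∑ i, (∑ k, (LinearMap.toMatrix bV bV (ρ (bg j))) i k * bV.repr y k)
        * eval (fun k => bV.repr y k) (pderiv i f) = 0 := by
      have h2' := congrArg (eval (fun k => bV.repr y k)) hid
      simpa only [map_sum, _root_.map_mul, eval_C, eval_X, map_zero] using h2'
    have h3 : ∀ i, ∑ k, (LinearMap.toMatrix bV bV (ρ (bg j))) i k * bV.repr y k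
        = bV.repr ((ρ (bg j)) y) i := by
      intro i
      have h4 := LinearMap.toMatrix_mulVec_repr bV bV (ρ (bg j)) y
      have h5 := congrFun h4 i
      simpa [Matrix.mulVec, dotProduct] using h5
    have hgoal : (LinearMap.toMatrix bg bV (Rmap ρ y))ᵀ j
          ⬝ᵥ JKAux.gradc f (fun k => bV.repr y k)
        = ∑ i, bV.repr ((ρ (bg j)) y) i * eval (fun k => bV.repr y k) (pderiv i f) := by
      simp only [dotProduct, Matrix.transpose_apply, LinearMap.toMatrix_apply, JKAux.gradc]
      rfl
    rw [hgoal]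
    calc ∑ i, bV.repr ((ρ (bg j)) y) i * eval (fun k => bV.repr y k) (pderiv i f)
        = ∑ i, (∑ k, (LinearMap.toMatrix bV bV (ρ (bg j))) i k * bV.repr y k)
            * eval (fun k => bV.repr y k) (pderiv i f) :=
          Finset.sum_congr rfl (fun i _ => by rw [h3 i])
      _ = 0 := h2
  have hreprshift : ∀ lam : ℂ,
      (fun k => bV.repr (x + lam • a) k) = fun k => xc k + lam * ac k := by
    intro lam
    funext k
    have h1 : bV.repr (x + lam • a) = bV.repr x + lam • bV.repr a := by
      rw [_root_.map_add, _root_.map_smul]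
    rw [h1, hxc, hac]
    simp
  have hgradshift : ∀ (f : MvPolynomial (Fin n) ℂ) (lam : ℂ),
      gradVec bV (shiftPoly bV a lam f) x = JKAux.gradc f (fun k => xc k + lam * ac k) := by
    intro f lam
    funext i
    show eval (fun k => bV.repr x k) (pderiv i (shiftPoly bV a lam f))
        = eval (fun k => xc k + lam * ac k) (pderiv i f)
    have h1 : shiftPoly bV a lam f
        = aeval (fun j => X j + C ((fun k => lam * bV.repr a k) j)) f := rfl
    rw [h1, JKAux.pderiv_aeval_shift (fun k => lam * bV.repr a k) f i, JKAux.eval_aeval]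
    have harg : (fun j => eval (fun k => bV.repr x k) (X j + C (lam * bV.repr a j)))
        = fun k => xc k + lam * ac k := by
      funext j
      rw [hxc, hac]
      simp
    rw [harg]
  set Pf : MvPolynomial (Fin n) ℂ → Fin n → Polynomial ℂ := fun f i =>
    MvPolynomial.aeval (fun k => Polynomial.C (xc k) + Polynomial.X * Polynomial.C (ac k))
      (pderiv i f) with hPfdef
  have hPfeval : ∀ (f : MvPolynomial (Fin n) ℂ) (lam : ℂ),
      (fun i => Polynomial.eval lam (Pf f i)) = JKAux.gradc f (fun k => xc k + lam * ac k) := by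
    intro f lam
    funext i
    rw [hPfdef]
    exact JKAux.eval_aeval_poly xc ac (pderiv i f) lam
  have hKle : ∀ lam ∈ Reg, kerRdual ρ bV (x + lam • a) ≤ LvertSub ρ bV x a := by
    intro lam hlam
    exact le_biSup (fun lam => kerRdual ρ bV (x + lam • a)) hlam
  have hcurveRHS : ∀ f, IsInvariantPoly ρ bV f → ∀ lam : ℂ,
      JKAux.gradc f (fun k => xc k + lam * ac k) ∈ LvertSub ρ bV x a := by
    intro f hf lam
    rw [← hPfeval f lam]
    apply JKAux.curve_mem_of_infinite _ (Pf f) Reg hRegInf ?_ lam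
    intro mu hmu
    rw [hPfeval f mu, ← hreprshift mu]
    exact hKle mu hmu (hinv_mem f hf (x + mu • a))
  have hLHSle : gradSpan bV (↑(Ya ρ bV a) : Set (MvPolynomial (Fin n) ℂ)) x
      ≤ LvertSub ρ bV x a := by
    show Submodule.span ℂ
        {v | ∃ f ∈ (↑(Ya ρ bV a) : Set (MvPolynomial (Fin n) ℂ)), v = gradVec bV f x}
      ≤ LvertSub ρ bV x a
    rw [Submodule.span_le]
    rintro v ⟨h, hh, rfl⟩
    have hgen : ∀ f0 ∈ {h | ∃ f, IsInvariantPoly ρ bV f ∧ ∃ lam : ℂ, h = shiftPoly bV a lam f},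
        JKAux.gradc f0 xc ∈ LvertSub ρ bV x a := by
      rintro f0 ⟨f, hf, lam, rfl⟩
      have he : JKAux.gradc (shiftPoly bV a lam f) xc
          = gradVec bV (shiftPoly bV a lam f) x := rfl
      rw [he, hgradshift f lam]
      exact hcurveRHS f hf lam
    exact JKAux.gradc_adjoin_mem _ xc _ hgen h hh
  -- the reverse inclusion
  have hgradsub : gradSpan bV {f | IsInvariantPoly ρ bV f} x ≤ kerRdual ρ bV x := by
    show Submodule.span ℂ {v | ∃ f ∈ {f | IsInvariantPoly ρ bV f}, v = gradVec bV f x}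
      ≤ kerRdual ρ bV x
    rw [Submodule.span_le]
    rintro v ⟨f, hf, rfl⟩
    exact hinv_mem f hf x
  have hnx : finrank ℂ (kerRdual ρ bV x) = n - r := by
    rw [hkerT x]
    have h1 := JKAux.finrank_kerT (LinearMap.toMatrix bg bV (Rmap ρ x))
    have h2 : finrank ℂ (JKAux.colSpan (LinearMap.toMatrix bg bV (Rmap ρ x))) = r := by
      rw [JKAux.finrank_colSpan_eq_rank, hrankmat, hrx]
    omega
  have hdx' : finrank ℂ (gradSpan bV {f | IsInvariantPoly ρ bV f} x) = n - r := by
    rw [hdx, hnV, hrx]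
  set c : ℕ := n - r with hcdef
  set famv : {f : MvPolynomial (Fin n) ℂ // IsInvariantPoly ρ bV f} → (Fin n → ℂ) :=
    fun f => JKAux.gradc (f : MvPolynomial (Fin n) ℂ) xc with hfamv
  have hfamspan : Submodule.span ℂ (Set.range famv)
      = gradSpan bV {f | IsInvariantPoly ρ bV f} x := by
    show Submodule.span ℂ (Set.range famv)
      = Submodule.span ℂ {v | ∃ f ∈ {f | IsInvariantPoly ρ bV f}, v = gradVec bV f x}
    congr 1
    ext w
    constructor
    · rintro ⟨f, rfl⟩
      exact ⟨f.1, f.2, rfl⟩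
    · rintro ⟨f, hf, rfl⟩
      exact ⟨⟨f, hf⟩, rfl⟩
  have hfamrank : c ≤ finrank ℂ (Submodule.span ℂ (Set.range famv)) := by
    rw [hfamspan, hdx']
  obtain ⟨gsel, hgselinj, hgselind⟩ := JKAux.exists_indep_subfamily famv c hfamrank
  set fi : Fin c → MvPolynomial (Fin n) ℂ := fun α => ((gsel α)).1 with hfi
  have hfiinv : ∀ α, IsInvariantPoly ρ bV (fi α) := fun α => (gsel α).2
  set G : Matrix (Fin n) (Fin c) (Polynomial ℂ) := Matrix.of (fun i α => Pf (fi α) i) with hG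
  have hGcols : ∀ lam : ℂ, (G.map (Polynomial.eval lam))ᵀ
      = fun α => JKAux.gradc (fi α) (fun k => xc k + lam * ac k) := by
    intro lam
    funext α i
    show Polynomial.eval lam (Pf (fi α) i)
        = JKAux.gradc (fi α) (fun k => xc k + lam * ac k) i
    exact congrFun (hPfeval (fi α) lam) i
  have hG0 : c ≤ finrank ℂ (JKAux.colSpan (G.map (Polynomial.eval (0:ℂ)))) := by
    have he : (fun α : Fin c => JKAux.gradc (fi α) (fun k => xc k + (0:ℂ) * ac k))
        = famv ∘ gsel := by
      funext α
      have hz : (fun k => xc k + (0:ℂ) * ac k) = xc := by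
        funext k; ring
      rw [hz]
      rfl
    have hspan : JKAux.colSpan (G.map (Polynomial.eval (0:ℂ)))
        = Submodule.span ℂ (Set.range (famv ∘ gsel)) := by
      rw [JKAux.colSpan, hGcols 0, he]
    rw [hspan, finrank_span_eq_card hgselind, Fintype.card_fin]
  have hGcof := JKAux.cofinite_rank_ge G c 0 hG0
  set S2 : Set ℂ := {lam : ℂ | c ≤ finrank ℂ (JKAux.colSpan (G.map (Polynomial.eval lam)))}
    with hS2
  set S' : Set ℂ := Reg ∩ S2 with hS'
  have hS'inf : S'.Infinite := by
    have hcompl : S'ᶜ = Regᶜ ∪ S2ᶜ := by rw [hS', Set.compl_inter]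
    have hfin : S'ᶜ.Finite := by
      rw [hcompl]
      exact hRegCofinite.union hGcof
    rw [← compl_compl S']
    exact hfin.infinite_compl
  have hGcolLHS : ∀ lam : ℂ, JKAux.colSpan (G.map (Polynomial.eval lam))
      ≤ gradSpan bV (↑(Ya ρ bV a) : Set (MvPolynomial (Fin n) ℂ)) x := by
    intro lam
    have hset : Set.range (G.map (Polynomial.eval lam))ᵀ
        = Set.range (fun α => JKAux.gradc (fi α) (fun k => xc k + lam * ac k)) := by
      rw [hGcols lam]
    rw [JKAux.colSpan, hset, Submodule.span_le]
    rintro w ⟨α, rfl⟩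
    show JKAux.gradc (fi α) (fun k => xc k + lam * ac k)
      ∈ gradSpan bV (↑(Ya ρ bV a) : Set (MvPolynomial (Fin n) ℂ)) x
    rw [← hgradshift (fi α) lam]
    apply Submodule.subset_span
    exact ⟨shiftPoly bV a lam (fi α), Algebra.subset_adjoin ⟨fi α, hfiinv α, lam, rfl⟩, rfl⟩
  have hKS' : ∀ lam ∈ S', JKAux.kerT (P.map (Polynomial.eval lam))
      ≤ gradSpan bV (↑(Ya ρ bV a) : Set (MvPolynomial (Fin n) ℂ)) x := by
    intro lam hlam
    obtain ⟨hlamReg, hlamS2⟩ := hlam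
    have hcolle : JKAux.colSpan (G.map (Polynomial.eval lam))
        ≤ JKAux.kerT (P.map (Polynomial.eval lam)) := by
      have hset : Set.range (G.map (Polynomial.eval lam))ᵀ
          = Set.range (fun α => JKAux.gradc (fi α) (fun k => xc k + lam * ac k)) := by
        rw [hGcols lam]
      rw [JKAux.colSpan, hset, Submodule.span_le]
      rintro w ⟨α, rfl⟩
      show JKAux.gradc (fi α) (fun k => xc k + lam * ac k)
        ∈ JKAux.kerT (P.map (Polynomial.eval lam))
      have hmem := hinv_mem (fi α) (hfiinv α) (x + lam • a)
      rw [hkerT (x + lam • a), ← hMtoMatrix lam, hreprshift lam] at hmem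
      exact hmem
    have hdimK : finrank ℂ (JKAux.kerT (P.map (Polynomial.eval lam))) = c := by
      have h1 := JKAux.finrank_kerT (P.map (Polynomial.eval lam))
      have h2 : finrank ℂ (JKAux.colSpan (P.map (Polynomial.eval lam))) = r :=
        (hRegIff lam).mp hlamReg
      rw [hcdef]
      omega
    have hKeq : JKAux.kerT (P.map (Polynomial.eval lam))
        = JKAux.colSpan (G.map (Polynomial.eval lam)) := by
      refine (Submodule.eq_of_le_of_finrank_le hcolle ?_).symm
      rw [hdimK]
      exact hlamS2
    rw [hKeq]
    exact hGcolLHS lam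
  have hRHSle : LvertSub ρ bV x a
      ≤ gradSpan bV (↑(Ya ρ bV a) : Set (MvPolynomial (Fin n) ℂ)) x := by
    show (⨆ lam ∈ {lam : ℂ | x + lam • a ∉ Sing ρ}, kerRdual ρ bV (x + lam • a))
      ≤ gradSpan bV (↑(Ya ρ bV a) : Set (MvPolynomial (Fin n) ℂ)) x
    refine iSup₂_le fun lam hlam => ?_
    rw [hkerT (x + lam • a), ← hMtoMatrix lam]
    intro v hv
    apply JKAux.mem_of_forall_dot
    intro u hu
    have humem : ∀ mu ∈ S', u ∈ JKAux.colSpan (P.map (Polynomial.eval mu)) := by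
      intro mu hmu
      apply JKAux.mem_colSpan_of_dot_kerT
      intro w hw
      exact hu w (hKS' mu hmu hw)
    have hu0 : u ∈ JKAux.colSpan (P.map (Polynomial.eval lam)) := by
      refine JKAux.mem_colSpan_limit P r u S' hS'inf humem (fun mu _ => hcolbound mu) lam ?_
      exact le_of_eq ((hRegIff lam).mp hlam).symm
    exact JKAux.col_dot_eq_zero_of_mem_kerT _ hv hu0
  exact le_antisymm hLHSle hRHSle
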